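/- arXiv:2604.02462 — 3 statements merged into one kernel-verified Lean document; each statement's English description precedes it below -/
import Mathlib

section
/- Let D be the open unit disc in ℂ, let b ∈ D, and let N be a nonnegative integer. Then for every holomorphic h on D with ∫_D |h|² dA < ∞, |h(b) − Σ_{n=0}^N (b^n/n!) h^{(n)}(0)| ≤ (∫_D |h(z)|² dA(z))^{1/2} · (∫_D |E_N(z \bar{b})|² dA(z))^{1/2}, where E_N(w) = π^{−1}((N+2) w^{N+1} − (N+1) w^{N+2}) / (1−w)². -/
open MeasureTheory Finset Metric Complex Set

/-- Orthogonality of monomials on the disc of radius r. -/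
lemma disc_ortho {r : ℝ} (hr : 0 < r) (k m : ℕ) :
    ∫ z in ball (0:ℂ) r, z ^ k * ((starRingEnd ℂ) z) ^ m =
      if k = m then ((Real.pi * r ^ (2 * m + 2) / (m + 1) : ℝ) : ℂ) else 0 := by
  have hms : MeasurableSet (polarCoord.target) := by
    rw [polarCoord_target]
    exact measurableSet_Ioi.prod measurableSet_Ioo
  rw [← integral_indicator measurableSet_ball,
    ← Complex.integral_comp_polarCoord_symm]
  have hcongr : ∀ p ∈ polarCoord.target,
      p.1 • (Set.indicator (ball (0:ℂ) r) (fun z => z ^ k * ((starRingEnd ℂ) z) ^ m)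
        (Complex.polarCoord.symm p))
      = Set.indicator (Set.Ioo (0:ℝ) r ×ˢ Set.Ioo (-Real.pi) Real.pi)
          (fun p => ((p.1 ^ (k + m + 1) : ℝ) : ℂ)
            * Complex.exp (((k : ℂ) - m) * p.2 * Complex.I)) p := by
    rintro ⟨s, θ⟩ hp
    rw [polarCoord_target] at hp
    obtain ⟨hs, hθ⟩ := hp
    simp only [Set.mem_Ioi] at hs
    by_cases hsr : s < r
    · rw [Set.indicator_of_mem, Set.indicator_of_mem]
      · have hsymm : Complex.polarCoord.symm (s, θ) = (s : ℂ) * Complex.exp (θ * Complex.I) := by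
          rw [Complex.polarCoord_symm_apply, Complex.exp_mul_I]
          push_cast
          ring
        rw [hsymm]
        have hconj : (starRingEnd ℂ) ((s : ℂ) * Complex.exp (θ * Complex.I))
            = (s : ℂ) * Complex.exp (-(θ * Complex.I)) := by
          rw [map_mul, ← Complex.exp_conj, map_mul, Complex.conj_ofReal, Complex.conj_I,
            Complex.conj_ofReal]
          ring_nf
        rw [hconj, mul_pow, mul_pow, ← Complex.exp_nat_mul, ← Complex.exp_nat_mul]
        rw [Complex.real_smul]
        have hexp : Complex.exp ((k : ℂ) * ((θ : ℂ) * Complex.I))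
            * Complex.exp ((m : ℂ) * -((θ : ℂ) * Complex.I))
            = Complex.exp (((k : ℂ) - m) * (θ : ℂ) * Complex.I) := by
          rw [← Complex.exp_add]; ring_nf
        push_cast
        rw [← hexp]
        ring
      · exact ⟨⟨hs, hsr⟩, hθ⟩
      · rw [mem_ball_zero_iff, Complex.norm_polarCoord_symm, abs_of_pos hs]
        exact hsr
    · rw [Set.indicator_of_notMem, Set.indicator_of_notMem, smul_zero]
      · rintro ⟨hp1, -⟩
        exact hsr hp1.2
      · rw [mem_ball_zero_iff, Complex.norm_polarCoord_symm, abs_of_pos hs]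
        exact hsr
  rw [setIntegral_congr_fun hms hcongr]
  have hSsub : (Set.Ioo (0:ℝ) r ×ˢ Set.Ioo (-Real.pi) Real.pi) ⊆ polarCoord.target := by
    rw [polarCoord_target]
    exact Set.prod_mono Set.Ioo_subset_Ioi_self subset_rfl
  have hSm : MeasurableSet (Set.Ioo (0:ℝ) r ×ˢ Set.Ioo (-Real.pi) Real.pi) :=
    measurableSet_Ioo.prod measurableSet_Ioo
  rw [setIntegral_indicator hSm, Set.inter_eq_right.mpr hSsub]
  rw [MeasureTheory.Measure.volume_eq_prod ℝ ℝ, setIntegral_prod_mul (fun x : ℝ => ((x ^ (k + m + 1) : ℝ) : ℂ))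
    (fun y : ℝ => Complex.exp (((k : ℂ) - m) * (y : ℂ) * Complex.I))]
  have hrad : (∫ x in Set.Ioo (0:ℝ) r, ((x ^ (k + m + 1) : ℝ) : ℂ))
      = ((r ^ (k + m + 2) / (k + m + 2) : ℝ) : ℂ) := by
    have h1 : (∫ x in Set.Ioo (0:ℝ) r, x ^ (k + m + 1))
        = r ^ (k + m + 2) / (k + m + 2) := by
      rw [← MeasureTheory.integral_Ioc_eq_integral_Ioo,
        ← intervalIntegral.integral_of_le hr.le, integral_pow]
      push_cast
      ring
    rw [← h1]
    exact integral_ofReal (f := fun x : ℝ => x ^ (k + m + 1))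
  rw [hrad]
  by_cases hkm : k = m
  · subst hkm
    have hang : (∫ θ in Set.Ioo (-Real.pi) Real.pi,
        Complex.exp (((k : ℂ) - k) * (θ : ℂ) * Complex.I))
        = ((2 * Real.pi : ℝ) : ℂ) := by
      simp only [sub_self, zero_mul, Complex.exp_zero]
      rw [setIntegral_const, Real.volume_real_Ioo]
      rw [max_eq_left (by linarith [Real.pi_pos] : (0:ℝ) ≤ Real.pi - -Real.pi),
        sub_neg_eq_add, Complex.real_smul]
      push_cast
      ring
    have hre : (r ^ (k + k + 2) / ((k : ℝ) + k + 2)) * (2 * Real.pi)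
        = Real.pi * r ^ (2 * k + 2) / ((k : ℝ) + 1) := by
      rw [div_mul_eq_mul_div, div_eq_div_iff (by positivity) (by positivity)]
      ring
    rw [hang, if_pos rfl, ← Complex.ofReal_mul, hre]
  · have hc : ((k : ℂ) - m) * Complex.I ≠ 0 := by
      apply mul_ne_zero _ Complex.I_ne_zero
      rw [sub_ne_zero]
      exact_mod_cast hkm
    have hang : (∫ θ in Set.Ioo (-Real.pi) Real.pi,
        Complex.exp (((k : ℂ) - m) * (θ : ℂ) * Complex.I)) = 0 := by
      have : ∀ θ : ℝ, Complex.exp (((k : ℂ) - m) * (θ : ℂ) * Complex.I)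
          = Complex.exp ((((k : ℂ) - m) * Complex.I) * (θ : ℂ)) := by
        intro θ; ring_nf
      simp_rw [this]
      rw [← MeasureTheory.integral_Ioc_eq_integral_Ioo,
        ← intervalIntegral.integral_of_le (by linarith [Real.pi_pos] : -Real.pi ≤ Real.pi),
        integral_exp_mul_complex hc]
      have hper : Complex.exp ((((k : ℂ) - m) * Complex.I) * (Real.pi : ℂ))
          = Complex.exp ((((k : ℂ) - m) * Complex.I) * ((-Real.pi : ℝ) : ℂ)) := by
        have : (((k : ℂ) - m) * Complex.I) * (Real.pi : ℂ)
            = (((k : ℂ) - m) * Complex.I) * ((-Real.pi : ℝ) : ℂ)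
              + ((k : ℤ) - m : ℤ) * (2 * (Real.pi : ℂ) * Complex.I) := by
          push_cast
          ring
        rw [this, Complex.exp_add, Complex.exp_int_mul_two_pi_mul_I, mul_one]
      rw [hper, sub_self, zero_div]
    rw [hang, if_neg hkm, mul_zero]

/-- Summability of Taylor coefficients against any radius `< 1`. -/
lemma taylor_coeff_summable {h : ℂ → ℂ} (hhol : DifferentiableOn ℂ h (ball (0:ℂ) 1))
    {r : ℝ} (hr0 : 0 ≤ r) (hr1 : r < 1) :
    Summable fun k => ‖(k.factorial : ℂ)⁻¹ * iteratedDeriv k h 0‖ * r ^ k := by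
  set a : ℕ → ℂ := fun n => (n.factorial : ℂ)⁻¹ * iteratedDeriv n h 0 with ha
  set ρ : ℝ := (r + 1) / 2 with hρ
  have hρ0 : 0 < ρ := by positivity
  have hρr : r < ρ := by rw [hρ]; linarith
  have hρ1 : ρ < 1 := by rw [hρ]; linarith
  have hmem : ((ρ : ℂ)) ∈ ball (0:ℂ) 1 := by
    rw [mem_ball_zero_iff, Complex.norm_real, Real.norm_of_nonneg hρ0.le]
    exact hρ1
  have H := Complex.hasSum_taylorSeries_on_ball hhol hmem
  have H2 : HasSum (fun n => a n * (ρ:ℂ) ^ n) (h ρ) := by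
    have : (fun n : ℕ => a n * (ρ:ℂ) ^ n)
        = fun n : ℕ => (n.factorial : ℂ)⁻¹ • ((ρ:ℂ) - 0) ^ n • iteratedDeriv n h 0 := by
      funext n
      simp only [ha, smul_eq_mul, sub_zero]
      ring
    rw [this]; exact H
  have hto : Filter.Tendsto (fun n => ‖a n‖ * ρ ^ n) Filter.atTop (nhds 0) := by
    have := H2.summable.tendsto_atTop_zero.norm
    simp only [norm_zero] at this
    refine this.congr fun n => ?_
    rw [norm_mul, norm_pow, Complex.norm_real, Real.norm_of_nonneg hρ0.le]
  obtain ⟨C, hC⟩ := hto.bddAbove_range.exists_ge 0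
  have key : ∀ k, ‖a k‖ * r ^ k ≤ C * (r / ρ) ^ k := by
    intro k
    have h1 : ‖a k‖ * ρ ^ k ≤ C := hC.2 _ ⟨k, rfl⟩
    have h2 : ‖a k‖ * r ^ k = (‖a k‖ * ρ ^ k) * (r / ρ) ^ k := by
      have hce : (r / ρ) ^ k * ρ ^ k = r ^ k := by
        rw [← mul_pow, div_mul_cancel₀ _ hρ0.ne']
      rw [← hce]
      ring
    rw [h2]
    exact mul_le_mul_of_nonneg_right h1 (by positivity)
  refine Summable.of_nonneg_of_le (fun k => by positivity) key ?_
  exact (summable_geometric_of_lt_one (by positivity) (by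
    rw [div_lt_one hρ0]; exact hρr)).mul_left C

/-- The moment formula on the unit disc. -/
lemma disc_moment {h : ℂ → ℂ} (hhol : DifferentiableOn ℂ h (ball (0:ℂ) 1))
    (hInt : IntegrableOn h (ball (0:ℂ) 1) volume) (m : ℕ) :
    ∫ z in ball (0:ℂ) 1, h z * ((starRingEnd ℂ) z) ^ m
      = ((Real.pi / (m + 1) : ℝ) : ℂ) * ((m.factorial : ℂ)⁻¹ * iteratedDeriv m h 0) := by
  set a : ℕ → ℂ := fun n => (n.factorial : ℂ)⁻¹ * iteratedDeriv n h 0 with ha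
  -- Step 1: the formula on each smaller disc.
  have key : ∀ r : ℝ, 0 < r → r < 1 →
      (∫ z in ball (0:ℂ) r, h z * ((starRingEnd ℂ) z) ^ m)
        = ((Real.pi * r ^ (2 * m + 2) / (m + 1) : ℝ) : ℂ) * a m := by
    intro r hr0 hr1
    have hsub : ball (0:ℂ) r ⊆ ball (0:ℂ) 1 := ball_subset_ball hr1.le
    have hsum : ∀ z ∈ ball (0:ℂ) r,
        h z * ((starRingEnd ℂ) z) ^ m
          = ∑' k, a k * z ^ k * ((starRingEnd ℂ) z) ^ m := by
      intro z hz
      have H := Complex.hasSum_taylorSeries_on_ball hhol (hsub hz)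
      have H2 : HasSum (fun k => a k * z ^ k * ((starRingEnd ℂ) z) ^ m)
          (h z * ((starRingEnd ℂ) z) ^ m) := by
        have := H.mul_right (((starRingEnd ℂ) z) ^ m)
        refine this.congr_fun fun k => ?_
        simp only [ha, smul_eq_mul, sub_zero]
        ring
      exact H2.tsum_eq.symm
    rw [setIntegral_congr_fun measurableSet_ball hsum]
    haveI hfin : IsFiniteMeasure (volume.restrict (ball (0:ℂ) r)) :=
      ⟨by rw [Measure.restrict_apply_univ]; exact measure_ball_lt_top⟩
    have hsummable := taylor_coeff_summable hhol hr0.le hr1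
    have hmeas : ∀ k : ℕ, AEStronglyMeasurable
        (fun z : ℂ => a k * z ^ k * ((starRingEnd ℂ) z) ^ m)
        (volume.restrict (ball (0:ℂ) r)) := by
      intro k
      exact ((continuous_const.mul (continuous_pow k)).mul
        ((Complex.continuous_conj.pow m))).aestronglyMeasurable
    have hbound : ∀ k : ℕ, (∫⁻ z in ball (0:ℂ) r,
        ‖a k * z ^ k * ((starRingEnd ℂ) z) ^ m‖₊ ∂volume)
        ≤ ENNReal.ofReal (‖a k‖ * r ^ k * r ^ m) * volume (ball (0:ℂ) r) := by
      intro k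
      have hle : ∀ᵐ z ∂(volume.restrict (ball (0:ℂ) r)),
          (‖a k * z ^ k * ((starRingEnd ℂ) z) ^ m‖₊ : ENNReal)
            ≤ ENNReal.ofReal (‖a k‖ * r ^ k * r ^ m) := by
        filter_upwards [ae_restrict_mem measurableSet_ball] with z hz
        rw [← enorm_eq_nnnorm, ← ofReal_norm]
        apply ENNReal.ofReal_le_ofReal
        rw [norm_mul, norm_mul, norm_pow, norm_pow, RCLike.norm_conj]
        have hzr : ‖z‖ < r := mem_ball_zero_iff.mp hz
        have h1 : ‖z‖ ^ k ≤ r ^ k := pow_le_pow_left₀ (norm_nonneg z) hzr.le k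
        have h2 : ‖z‖ ^ m ≤ r ^ m := pow_le_pow_left₀ (norm_nonneg z) hzr.le m
        have := mul_le_mul (mul_le_mul_of_nonneg_left h1 (norm_nonneg (a k))) h2
          (by positivity) (by positivity)
        exact this
      calc (∫⁻ z in ball (0:ℂ) r, ‖a k * z ^ k * ((starRingEnd ℂ) z) ^ m‖₊ ∂volume)
          ≤ ∫⁻ _ in ball (0:ℂ) r, ENNReal.ofReal (‖a k‖ * r ^ k * r ^ m) ∂volume :=
            lintegral_mono_ae hle
        _ = ENNReal.ofReal (‖a k‖ * r ^ k * r ^ m) * volume (ball (0:ℂ) r) := by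
            rw [setLIntegral_const]
    have hfin2 : (∑' k : ℕ, ∫⁻ z in ball (0:ℂ) r,
        ‖a k * z ^ k * ((starRingEnd ℂ) z) ^ m‖₊ ∂volume) ≠ ⊤ := by
      refine ne_top_of_le_ne_top ?_ (ENNReal.tsum_le_tsum hbound)
      rw [ENNReal.tsum_mul_right]
      apply ENNReal.mul_ne_top _ measure_ball_lt_top.ne
      have hsum2 : Summable fun k => ‖a k‖ * r ^ k * r ^ m :=
        hsummable.mul_right _
      rw [← ENNReal.ofReal_tsum_of_nonneg (fun k => by positivity) hsum2]
      exact ENNReal.ofReal_ne_top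
    rw [integral_tsum hmeas hfin2]
    have hterm : ∀ k : ℕ, (∫ z in ball (0:ℂ) r, a k * z ^ k * ((starRingEnd ℂ) z) ^ m)
        = if k = m then ((Real.pi * r ^ (2 * m + 2) / (m + 1) : ℝ) : ℂ) * a m else 0 := by
      intro k
      have : (fun z : ℂ => a k * z ^ k * ((starRingEnd ℂ) z) ^ m)
          = fun z : ℂ => a k * (z ^ k * ((starRingEnd ℂ) z) ^ m) := by
        funext z; ring
      rw [this, integral_const_mul, disc_ortho hr0 k m]
      by_cases hkm : k = m
      · subst hkm; rw [if_pos rfl, if_pos rfl, mul_comm]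
      · rw [if_neg hkm, if_neg hkm, mul_zero]
    rw [tsum_congr hterm, tsum_eq_single m (fun k hk => by rw [if_neg hk]), if_pos rfl]
  -- Step 2: pass to the limit r → 1.
  set R : ℕ → ℝ := fun i => 1 - 1 / (i + 2) with hR
  have hR0 : ∀ i, 0 < R i := by
    intro i
    have h2 : (1 : ℝ) / (i + 2) ≤ 1 / 2 := by
      apply one_div_le_one_div_of_le <;> [norm_num; (push_cast; linarith)]
    simp only [hR]
    linarith
  have hR1 : ∀ i, R i < 1 := by
    intro i
    have : (0:ℝ) < 1 / (i + 2) := by positivity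
    simp only [hR]; linarith
  have hmono : Monotone fun i => ball (0:ℂ) (R i) := by
    intro i j hij
    apply ball_subset_ball
    simp only [hR, sub_le_sub_iff_left]
    apply one_div_le_one_div_of_le (by positivity)
    have : (i:ℝ) ≤ j := Nat.cast_le.mpr hij
    linarith
  have hunion : (⋃ i, ball (0:ℂ) (R i)) = ball (0:ℂ) 1 := by
    ext z
    simp only [Set.mem_iUnion, mem_ball_zero_iff]
    constructor
    · rintro ⟨i, hi⟩; exact hi.trans (hR1 i)
    · intro hz
      obtain ⟨n, hn⟩ := exists_nat_one_div_lt (by linarith : (0:ℝ) < 1 - ‖z‖)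
      refine ⟨n, ?_⟩
      have h2 : (1:ℝ) / (n + 2) ≤ 1 / (n + 1) := by
        apply one_div_le_one_div_of_le (by positivity)
        push_cast; linarith
      simp only [hR]
      push_cast at hn ⊢
      linarith
  have hIntf : IntegrableOn (fun z : ℂ => h z * ((starRingEnd ℂ) z) ^ m)
      (ball (0:ℂ) 1) volume := by
    refine Integrable.mono hInt ?_ ?_
    · exact (hhol.continuousOn.mul
        ((Complex.continuous_conj.pow m).continuousOn)).aestronglyMeasurable
        measurableSet_ball
    · filter_upwards [ae_restrict_mem measurableSet_ball] with z hz
      rw [norm_mul, norm_pow, RCLike.norm_conj]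
      have hz1 : ‖z‖ < 1 := mem_ball_zero_iff.mp hz
      have : ‖z‖ ^ m ≤ 1 := pow_le_one₀ (norm_nonneg z) hz1.le
      calc ‖h z‖ * ‖z‖ ^ m ≤ ‖h z‖ * 1 :=
            mul_le_mul_of_nonneg_left this (norm_nonneg _)
        _ = ‖h z‖ := mul_one _
  have hlim1 : Filter.Tendsto (fun i => ∫ z in ball (0:ℂ) (R i),
      h z * ((starRingEnd ℂ) z) ^ m) Filter.atTop
      (nhds (∫ z in ball (0:ℂ) 1, h z * ((starRingEnd ℂ) z) ^ m)) := by
    have := tendsto_setIntegral_of_monotone (fun i => measurableSet_ball) hmono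
      (by rw [hunion]; exact hIntf)
    rwa [hunion] at this
  have hlimR : Filter.Tendsto R Filter.atTop (nhds 1) := by
    have h1 : Filter.Tendsto (fun i : ℕ => ((i:ℝ) + 2)) Filter.atTop Filter.atTop :=
      Filter.tendsto_atTop_add_const_right _ 2 tendsto_natCast_atTop_atTop
    have h2 : Filter.Tendsto (fun i : ℕ => 1 / ((i:ℝ) + 2)) Filter.atTop (nhds 0) :=
      h1.inv_tendsto_atTop.congr (fun i => (one_div _).symm)
    have h3 := h2.const_sub 1
    simp only [sub_zero] at h3
    exact h3.congr fun i => by rw [hR]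
  have hlim2 : Filter.Tendsto (fun i => ((Real.pi * (R i) ^ (2 * m + 2) / (m + 1) : ℝ) : ℂ) * a m)
      Filter.atTop (nhds (((Real.pi / (m + 1) : ℝ) : ℂ) * a m)) := by
    have hcont : Continuous fun t : ℝ => ((Real.pi * t ^ (2 * m + 2) / (m + 1) : ℝ) : ℂ) * a m := by
      continuity
    have := (hcont.tendsto 1).comp hlimR
    simpa [Function.comp_def] using this
  have : Filter.Tendsto (fun i => ∫ z in ball (0:ℂ) (R i),
      h z * ((starRingEnd ℂ) z) ^ m) Filter.atTop
      (nhds (((Real.pi / (m + 1) : ℝ) : ℂ) * a m)) := by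
    refine hlim2.congr fun i => ?_
    rw [key (R i) (hR0 i) (hR1 i)]
  exact tendsto_nhds_unique hlim1 this

lemma E_hasSum {w : ℂ} (hw : ‖w‖ < 1) (N : ℕ) :
    HasSum (fun j : ℕ => ((j : ℂ) + N + 2) * w ^ (j + N + 1))
      (((((N:ℂ)) + 2) * w ^ (N + 1) - (((N:ℂ)) + 1) * w ^ (N + 2)) / (1 - w) ^ 2) := by
  have hw1 : (1:ℂ) - w ≠ 0 := by
    rw [sub_ne_zero]
    intro hc
    rw [← hc] at hw
    simp at hw
  have h1 : HasSum (fun j : ℕ => (j:ℂ) * w ^ j) (w / (1 - w) ^ 2) :=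
    hasSum_coe_mul_geometric_of_norm_lt_one hw
  have h2 : HasSum (fun j : ℕ => ((N:ℂ) + 2) * w ^ j) (((N:ℂ) + 2) * (1 - w)⁻¹) :=
    (hasSum_geometric_of_norm_lt_one hw).mul_left _
  have h3 := (h1.add h2).mul_left (w ^ (N + 1))
  have heq : (fun j : ℕ => ((j : ℂ) + N + 2) * w ^ (j + N + 1))
      = fun j : ℕ => w ^ (N + 1) * ((j:ℂ) * w ^ j + ((N:ℂ) + 2) * w ^ j) := by
    funext j
    rw [pow_add]
    ring
  rw [heq]
  convert h3 using 1
  · rfl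
  field_simp
  ring

set_option maxHeartbeats 1000000 in
/-- Explicit approximate null quadrature identity on the unit disc: for `b ∈ D`
and `N ≥ 0`, every holomorphic square-integrable `h` on `D` satisfies
`|h(b) − Σ_{n=0}^N (bⁿ/n!) h^{(n)}(0)| ≤ ‖h‖_{L²(D)} · ‖E_N(z b̄)‖_{L²(D)}`,
where `E_N(w) = π⁻¹((N+2)w^{N+1} − (N+1)w^{N+2})/(1−w)²`. -/
theorem unit_disc_approximate_quadrature
    (b : ℂ) (hb : b ∈ Metric.ball (0 : ℂ) 1) (N : ℕ)
    (h : ℂ → ℂ) (hhol : DifferentiableOn ℂ h (Metric.ball (0 : ℂ) 1))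
    (hL2 : IntegrableOn (fun z => ‖h z‖ ^ 2) (Metric.ball (0 : ℂ) 1) volume) :
    ‖h b - ∑ n ∈ Finset.range (N + 1),
        (b ^ n / (n.factorial : ℂ)) * iteratedDeriv n h 0‖
      ≤ Real.sqrt (∫ z in Metric.ball (0 : ℂ) 1, ‖h z‖ ^ 2) *
        Real.sqrt (∫ z in Metric.ball (0 : ℂ) 1,
          ‖(Real.pi : ℂ)⁻¹ *
            ((((N : ℂ) + 2) * (z * (starRingEnd ℂ) b) ^ (N + 1)
              - ((N : ℂ) + 1) * (z * (starRingEnd ℂ) b) ^ (N + 2))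
            / (1 - z * (starRingEnd ℂ) b) ^ 2)‖ ^ 2) := by
  set D := Metric.ball (0:ℂ) 1 with hD
  set a : ℕ → ℂ := fun n => (n.factorial : ℂ)⁻¹ * iteratedDeriv n h 0 with ha
  set g : ℂ → ℂ := fun z => (Real.pi : ℂ)⁻¹ *
      ((((N : ℂ) + 2) * (z * (starRingEnd ℂ) b) ^ (N + 1)
        - ((N : ℂ) + 1) * (z * (starRingEnd ℂ) b) ^ (N + 2))
      / (1 - z * (starRingEnd ℂ) b) ^ 2) with hg
  have hbnorm : ‖b‖ < 1 := mem_ball_zero_iff.mp hb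
  have hmeas : AEStronglyMeasurable h (volume.restrict D) :=
    hhol.continuousOn.aestronglyMeasurable measurableSet_ball
  -- h is integrable on D
  have hInt : IntegrableOn h D volume := by
    have hc : IntegrableOn (fun _ : ℂ => (1:ℝ)) D volume :=
      (integrableOn_const_iff).mpr (Or.inr measure_ball_lt_top)
    refine Integrable.mono (hc.add hL2) hmeas ?_
    filter_upwards with z
    simp only [Pi.add_apply]
    rw [Real.norm_of_nonneg (by positivity : (0:ℝ) ≤ 1 + ‖h z‖ ^ 2)]
    nlinarith [norm_nonneg (h z), sq_nonneg (‖h z‖ - 1)]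
  -- Taylor expansion at b and its tail
  have hTb : HasSum (fun n => a n * b ^ n) (h b) := by
    have H := Complex.hasSum_taylorSeries_on_ball hhol hb
    refine H.congr_fun fun n => ?_
    simp only [ha, smul_eq_mul, sub_zero]
    ring
  have hTail : HasSum (fun j => a (j + (N + 1)) * b ^ (j + (N + 1)))
      (h b - ∑ n ∈ Finset.range (N + 1), a n * b ^ n) := by
    refine (hasSum_nat_add_iff (f := fun n => a n * b ^ n) (N + 1)).mpr ?_
    rw [sub_add_cancel]
    exact hTb
  -- the conjugate of g as a series
  have hwlt : ∀ z ∈ D, ‖(starRingEnd ℂ) z * b‖ < 1 := by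
    intro z hz
    have hz1 : ‖z‖ < 1 := mem_ball_zero_iff.mp hz
    rw [norm_mul, RCLike.norm_conj]
    nlinarith [norm_nonneg z, norm_nonneg b]
  have hconj_g : ∀ z ∈ D, HasSum
      (fun j : ℕ => (Real.pi : ℂ)⁻¹ * (((j : ℂ) + N + 2) * ((starRingEnd ℂ) z * b) ^ (j + N + 1)))
      ((starRingEnd ℂ) (g z)) := by
    intro z hz
    have H := (E_hasSum (hwlt z hz) N).mul_left (Real.pi : ℂ)⁻¹
    convert H using 1
    · rfl
    rw [hg]
    simp only [map_mul, map_inv₀, map_div₀, map_sub, map_pow, map_one, map_add,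
      Complex.conj_conj, Complex.conj_ofReal, map_ofNat, Complex.conj_natCast]
  -- the integrand series
  have hiSum : ∀ z ∈ D, HasSum
      (fun j : ℕ => h z * ((Real.pi : ℂ)⁻¹ *
        (((j : ℂ) + N + 2) * ((starRingEnd ℂ) z * b) ^ (j + N + 1))))
      (h z * (starRingEnd ℂ) (g z)) :=
    fun z hz => (hconj_g z hz).mul_left (h z)
  -- swap sum and integral
  have hmeasF : ∀ j : ℕ, AEStronglyMeasurable
      (fun z : ℂ => h z * ((Real.pi : ℂ)⁻¹ *
        (((j : ℂ) + N + 2) * ((starRingEnd ℂ) z * b) ^ (j + N + 1))))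
      (volume.restrict D) := by
    intro j
    exact hmeas.mul (continuous_const.mul (continuous_const.mul
      ((Complex.continuous_conj.mul continuous_const).pow _))).aestronglyMeasurable
  have hIntNorm : (∫⁻ z in D, ‖h z‖₊ ∂volume) ≠ ⊤ := hInt.2.ne
  have hCsum : Summable fun j : ℕ => ((j:ℝ) + N + 2) * ‖b‖ ^ (j + N + 1) / Real.pi := by
    have hb' : ‖(‖b‖ : ℝ)‖ < 1 := by rwa [Real.norm_eq_abs, _root_.abs_of_nonneg (norm_nonneg b)]
    have s1 : Summable fun j : ℕ => (j:ℝ) * ‖b‖ ^ j :=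
      (hasSum_coe_mul_geometric_of_norm_lt_one hb').summable
    have s2 : Summable fun j : ℕ => ((N:ℝ) + 2) * ‖b‖ ^ j :=
      (hasSum_geometric_of_norm_lt_one hb').summable.mul_left _
    have s4 := (s1.add s2).mul_left (‖b‖ ^ (N + 1) / Real.pi)
    refine s4.congr fun j => ?_
    rw [pow_add]
    field_simp
    ring
  have hbdF : ∀ j : ℕ, (∫⁻ z in D, ‖h z * ((Real.pi : ℂ)⁻¹ *
        (((j : ℂ) + N + 2) * ((starRingEnd ℂ) z * b) ^ (j + N + 1)))‖₊ ∂volume)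
      ≤ ENNReal.ofReal (((j:ℝ) + N + 2) * ‖b‖ ^ (j + N + 1) / Real.pi)
          * ∫⁻ z in D, ‖h z‖₊ ∂volume := by
    intro j
    rw [← lintegral_const_mul' _ _ ENNReal.ofReal_ne_top]
    refine lintegral_mono_ae ?_
    filter_upwards [ae_restrict_mem measurableSet_ball] with z hz
    rw [← enorm_eq_nnnorm, ← enorm_eq_nnnorm, ← ofReal_norm, ← ofReal_norm,
      ← ENNReal.ofReal_mul (by positivity)]
    apply ENNReal.ofReal_le_ofReal
    rw [norm_mul, norm_mul, norm_mul, norm_pow, norm_mul, RCLike.norm_conj]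
    have hz1 : ‖z‖ < 1 := mem_ball_zero_iff.mp hz
    have h1 : (‖z‖ * ‖b‖) ^ (j + N + 1) ≤ ‖b‖ ^ (j + N + 1) := by
      apply pow_le_pow_left₀ (by positivity)
      nlinarith [norm_nonneg b]
    have h2 : ‖((j : ℂ) + N + 2)‖ = (j:ℝ) + N + 2 := by
      rw [show ((j : ℂ) + N + 2) = (((j:ℝ) + N + 2 : ℝ) : ℂ) by push_cast; ring,
        Complex.norm_real, Real.norm_of_nonneg (by positivity)]
    have h3 : ‖((Real.pi : ℂ))⁻¹‖ = Real.pi⁻¹ := by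
      rw [norm_inv, Complex.norm_real, Real.norm_of_nonneg Real.pi_pos.le]
    rw [h2, h3]
    have := mul_le_mul_of_nonneg_left h1 (by positivity : (0:ℝ) ≤ Real.pi⁻¹ * (((j:ℝ) + N + 2)))
    calc ‖h z‖ * (Real.pi⁻¹ * (((j:ℝ) + N + 2) * (‖z‖ * ‖b‖) ^ (j + N + 1)))
        ≤ ‖h z‖ * (Real.pi⁻¹ * (((j:ℝ) + N + 2) * ‖b‖ ^ (j + N + 1))) := by
          apply mul_le_mul_of_nonneg_left _ (norm_nonneg _)
          apply mul_le_mul_of_nonneg_left _ (by positivity)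
          exact mul_le_mul_of_nonneg_left h1 (by positivity)
      _ = ((j:ℝ) + N + 2) * ‖b‖ ^ (j + N + 1) / Real.pi * ‖h z‖ := by
          field_simp
  have hfinF : (∑' j : ℕ, ∫⁻ z in D, ‖h z * ((Real.pi : ℂ)⁻¹ *
        (((j : ℂ) + N + 2) * ((starRingEnd ℂ) z * b) ^ (j + N + 1)))‖₊ ∂volume) ≠ ⊤ := by
    refine ne_top_of_le_ne_top ?_ (ENNReal.tsum_le_tsum hbdF)
    rw [ENNReal.tsum_mul_right]
    apply ENNReal.mul_ne_top _ hIntNorm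
    rw [← ENNReal.ofReal_tsum_of_nonneg (fun j => by positivity) hCsum]
    exact ENNReal.ofReal_ne_top
  -- the key identity
  have hkey : (∫ z in D, h z * (starRingEnd ℂ) (g z))
      = h b - ∑ n ∈ Finset.range (N + 1), a n * b ^ n := by
    rw [setIntegral_congr_fun measurableSet_ball
      (fun z hz => ((hiSum z hz).tsum_eq).symm)]
    rw [integral_tsum hmeasF hfinF]
    rw [← hTail.tsum_eq]
    refine tsum_congr fun j => ?_
    have hrw : (fun z : ℂ => h z * ((Real.pi : ℂ)⁻¹ *
          (((j : ℂ) + N + 2) * ((starRingEnd ℂ) z * b) ^ (j + N + 1))))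
        = fun z : ℂ => ((Real.pi : ℂ)⁻¹ * (((j : ℂ) + N + 2) * b ^ (j + N + 1)))
          * (h z * ((starRingEnd ℂ) z) ^ (j + N + 1)) := by
      funext z
      rw [mul_pow]
      ring
    rw [hrw, integral_const_mul, disc_moment hhol hInt (j + N + 1)]
    have hπ : (Real.pi : ℂ) ≠ 0 := by
      exact_mod_cast Real.pi_ne_zero
    have hj2 : ((j:ℂ) + N + 2) ≠ 0 := by
      have hpos : (0:ℝ) < (j:ℝ) + N + 2 := by positivity
      intro hc
      have := congrArg Complex.re hc
      push_cast at this
      simp at this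
      linarith
    have hcast : (((j + N + 1 : ℕ) : ℝ) + 1 : ℝ) = ((j:ℝ) + N + 2) := by push_cast; ring
    rw [Complex.ofReal_div, hcast]
    have hcc : ((((j:ℝ) + N + 2 : ℝ)) : ℂ) = ((j:ℂ) + N + 2) := by push_cast; ring
    rw [hcc]
    have halg : ∀ (c p A B : ℂ), p ≠ 0 → c ≠ 0 →
        p⁻¹ * (c * B) * (p / c * A) = A * B := by
      intro c p A B hp hc
      field_simp
    exact halg ((j:ℂ) + N + 2) (Real.pi : ℂ) (a (j + N + 1)) (b ^ (j + N + 1)) hπ hj2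
  -- rewrite the target difference
  have hsum_eq : ∑ n ∈ Finset.range (N + 1), (b ^ n / (n.factorial : ℂ)) * iteratedDeriv n h 0
      = ∑ n ∈ Finset.range (N + 1), a n * b ^ n := by
    refine Finset.sum_congr rfl fun n _ => ?_
    rw [ha]
    ring
  rw [hsum_eq, ← hkey]
  -- Cauchy-Schwarz
  haveI : IsFiniteMeasure (volume.restrict D) :=
    ⟨by rw [Measure.restrict_apply_univ]; exact measure_ball_lt_top⟩
  have hofReal2 : ENNReal.ofReal (2:ℝ) = 2 := by norm_num
  have hMh : MemLp h (ENNReal.ofReal (2:ℝ)) (volume.restrict D) := by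
    rw [hofReal2]
    exact (memLp_two_iff_integrable_sq_norm hmeas).mpr hL2
  have hwlt' : ∀ z ∈ D, ‖z * (starRingEnd ℂ) b‖ < 1 := by
    intro z hz
    have hz1 : ‖z‖ < 1 := mem_ball_zero_iff.mp hz
    rw [norm_mul, RCLike.norm_conj]
    nlinarith [norm_nonneg z, norm_nonneg b]
  have hwle : ∀ z ∈ D, ‖z * (starRingEnd ℂ) b‖ ≤ ‖b‖ := by
    intro z hz
    have hz1 : ‖z‖ < 1 := mem_ball_zero_iff.mp hz
    rw [norm_mul, RCLike.norm_conj]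
    nlinarith [norm_nonneg z, norm_nonneg b]
  have hden : ∀ z ∈ D, (1 - z * (starRingEnd ℂ) b) ^ 2 ≠ 0 := by
    intro z hz
    apply pow_ne_zero
    rw [sub_ne_zero]
    intro hc
    have := hwlt' z hz
    rw [← hc] at this
    simp at this
  have hgcont : ContinuousOn g D := by
    rw [hg]
    refine continuousOn_const.mul (ContinuousOn.div ?_ ?_ hden)
    · fun_prop
    · fun_prop
  have hgmeas : AEStronglyMeasurable g (volume.restrict D) :=
    hgcont.aestronglyMeasurable measurableSet_ball
  have hNnorm : ∀ c : ℝ, 0 ≤ c → ‖((c : ℂ))‖ = c := fun c hc => by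
    rw [Complex.norm_real, Real.norm_of_nonneg hc]
  have hgbd : ∀ z ∈ D, ‖g z‖ ≤ Real.pi⁻¹ * ((2 * N + 3) / (1 - ‖b‖) ^ 2) := by
    intro z hz
    have hwle' := hwle z hz
    have hb1 : 0 < 1 - ‖b‖ := by linarith
    simp only [hg]
    rw [norm_mul, norm_inv, Complex.norm_real, Real.norm_of_nonneg Real.pi_pos.le,
      norm_div, norm_pow]
    apply mul_le_mul_of_nonneg_left _ (by positivity)
    have hnum : ‖((N : ℂ) + 2) * (z * (starRingEnd ℂ) b) ^ (N + 1)
        - ((N : ℂ) + 1) * (z * (starRingEnd ℂ) b) ^ (N + 2)‖ ≤ 2 * N + 3 := by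
      refine (norm_sub_le _ _).trans ?_
      rw [norm_mul, norm_mul, norm_pow, norm_pow]
      have e1 : ‖((N : ℂ) + 2)‖ = (N : ℝ) + 2 := by
        rw [show ((N : ℂ) + 2) = (((N : ℝ) + 2 : ℝ) : ℂ) by push_cast; ring]
        exact hNnorm _ (by positivity)
      have e2 : ‖((N : ℂ) + 1)‖ = (N : ℝ) + 1 := by
        rw [show ((N : ℂ) + 1) = (((N : ℝ) + 1 : ℝ) : ℂ) by push_cast; ring]
        exact hNnorm _ (by positivity)
      rw [e1, e2]
      have p1 : ‖z * (starRingEnd ℂ) b‖ ^ (N + 1) ≤ 1 :=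
        pow_le_one₀ (norm_nonneg _) (by linarith)
      have p2 : ‖z * (starRingEnd ℂ) b‖ ^ (N + 2) ≤ 1 :=
        pow_le_one₀ (norm_nonneg _) (by linarith)
      nlinarith [norm_nonneg (z * (starRingEnd ℂ) b), Nat.cast_nonneg (α := ℝ) N]
    have hdenlb : (1 - ‖b‖) ^ 2 ≤ ‖1 - z * (starRingEnd ℂ) b‖ ^ 2 := by
      apply pow_le_pow_left₀ hb1.le
      calc 1 - ‖b‖ ≤ 1 - ‖z * (starRingEnd ℂ) b‖ := by linarith
        _ = ‖(1:ℂ)‖ - ‖z * (starRingEnd ℂ) b‖ := by rw [norm_one]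
        _ ≤ ‖1 - z * (starRingEnd ℂ) b‖ := norm_sub_norm_le _ _
    apply div_le_div₀ (by positivity) hnum (by positivity) hdenlb
  have hMg : MemLp g (ENNReal.ofReal (2:ℝ)) (volume.restrict D) := by
    refine MemLp.of_bound hgmeas (Real.pi⁻¹ * ((2 * N + 3) / (1 - ‖b‖) ^ 2)) ?_
    filter_upwards [ae_restrict_mem measurableSet_ball] with z hz
    exact hgbd z hz
  have hpq : Real.HolderConjugate 2 2 := Real.HolderConjugate.two_two
  calc ‖∫ z in D, h z * (starRingEnd ℂ) (g z)‖
      ≤ ∫ z in D, ‖h z * (starRingEnd ℂ) (g z)‖ := norm_integral_le_integral_norm _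
    _ = ∫ z in D, ‖h z‖ * ‖g z‖ := by
        refine integral_congr_ae (Filter.Eventually.of_forall fun z => ?_)
        simp only [norm_mul, RCLike.norm_conj]
    _ ≤ (∫ z in D, ‖h z‖ ^ (2:ℝ)) ^ ((1:ℝ)/2) * (∫ z in D, ‖g z‖ ^ (2:ℝ)) ^ ((1:ℝ)/2) :=
        integral_mul_norm_le_Lp_mul_Lq hpq hMh hMg
    _ = Real.sqrt (∫ z in D, ‖h z‖ ^ 2) * Real.sqrt (∫ z in D, ‖g z‖ ^ 2) := by
        have e1 : (∫ z in D, ‖h z‖ ^ (2:ℝ)) = ∫ z in D, ‖h z‖ ^ 2 := by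
          refine integral_congr_ae (Filter.Eventually.of_forall fun z => ?_)
          simp [Real.rpow_two]
        have e2 : (∫ z in D, ‖g z‖ ^ (2:ℝ)) = ∫ z in D, ‖g z‖ ^ 2 := by
          refine integral_congr_ae (Filter.Eventually.of_forall fun z => ?_)
          simp [Real.rpow_two]
        rw [Real.sqrt_eq_rpow, Real.sqrt_eq_rpow, e1, e2]
end

section
/- Let a, b be distinct points of ℂ, let γ : [0,1] → ℂ be a continuous curve with γ(0) = b and γ(1) = a, and let δ > 0. Then for every ε > 0 there exist a positive integer N and complex constants A_1, …, A_N such that for every z ∈ ℂ whose distance to the image γ([0,1]) is at least 2δ, |1/(z−b) − Σ_{j=1}^N A_j / (z−a)^j| < ε. (Runge's pole-pushing approximation of 1/(z−b) by a polynomial in 1/(z−a) on the set of points at distance greater than 2δ from the curve.) -/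
open Finset

namespace RungeAux

open Polynomial

/-- `rq a Q z = (z-a)⁻¹ * Q((z-a)⁻¹)`: a "polynomial in `(z-a)⁻¹` with no constant term". -/
noncomputable def rq (a : ℂ) (Q : Polynomial ℂ) : ℂ → ℂ :=
  fun z => (z - a)⁻¹ * Q.eval (z - a)⁻¹

/-- `f` is uniformly approximable on `E` by polynomials in `(z-a)⁻¹` w/o constant term. -/
def ApproxOn (E : Set ℂ) (a : ℂ) (f : ℂ → ℂ) : Prop :=
  ∀ ε : ℝ, 0 < ε → ∃ Q : Polynomial ℂ, ∀ z ∈ E, ‖f z - rq a Q z‖ < ε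

lemma rq_mul (a : ℂ) (Q1 Q2 : Polynomial ℂ) (z : ℂ) :
    rq a Q1 z * rq a Q2 z = rq a (X * Q1 * Q2) z := by
  simp only [rq, eval_mul, eval_X]
  ring

lemma approx_add {E : Set ℂ} {a : ℂ} {f g : ℂ → ℂ}
    (hf : ApproxOn E a f) (hg : ApproxOn E a g) :
    ApproxOn E a (fun z => f z + g z) := by
  intro ε hε
  obtain ⟨Q1, hQ1⟩ := hf (ε / 2) (by linarith)
  obtain ⟨Q2, hQ2⟩ := hg (ε / 2) (by linarith)
  refine ⟨Q1 + Q2, fun z hz => ?_⟩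
  have h1 := hQ1 z hz
  have h2 := hQ2 z hz
  have hrq : rq a (Q1 + Q2) z = rq a Q1 z + rq a Q2 z := by
    simp only [rq, eval_add]; ring
  rw [hrq]
  calc ‖f z + g z - (rq a Q1 z + rq a Q2 z)‖
      = ‖(f z - rq a Q1 z) + (g z - rq a Q2 z)‖ := by ring_nf
    _ ≤ ‖f z - rq a Q1 z‖ + ‖g z - rq a Q2 z‖ := norm_add_le _ _
    _ < ε / 2 + ε / 2 := by linarith
    _ = ε := by ring

lemma approx_const_mul {E : Set ℂ} {a : ℂ} {f : ℂ → ℂ} (c : ℂ)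
    (hf : ApproxOn E a f) :
    ApproxOn E a (fun z => c * f z) := by
  intro ε hε
  have hpos : 0 < ε / (‖c‖ + 1) := by positivity
  obtain ⟨Q, hQ⟩ := hf _ hpos
  refine ⟨C c * Q, fun z hz => ?_⟩
  have h1 := hQ z hz
  have hrq : rq a (C c * Q) z = c * rq a Q z := by
    simp only [rq, eval_mul, eval_C]; ring
  rw [hrq]
  have : c * f z - c * rq a Q z = c * (f z - rq a Q z) := by ring
  rw [this, norm_mul]
  calc ‖c‖ * ‖f z - rq a Q z‖ ≤ ‖c‖ * (ε / (‖c‖ + 1)) := by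
        apply mul_le_mul_of_nonneg_left (le_of_lt h1) (norm_nonneg _)
    _ < ε := by
        rw [mul_div_assoc']
        rw [div_lt_iff₀ (by positivity : (0:ℝ) < ‖c‖ + 1)]
        nlinarith [norm_nonneg c]

lemma approx_mul {E : Set ℂ} {a : ℂ} {f g : ℂ → ℂ} {Cf Cg : ℝ}
    (hCf : 0 ≤ Cf) (hCg : 0 ≤ Cg)
    (hf : ApproxOn E a f) (hg : ApproxOn E a g)
    (hbf : ∀ z ∈ E, ‖f z‖ ≤ Cf)
    (hbg : ∀ z ∈ E, ‖g z‖ ≤ Cg) :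
    ApproxOn E a (fun z => f z * g z) := by
  intro ε hε
  have hden : (0:ℝ) < Cf + Cg + 2 := by linarith
  set ε' : ℝ := min 1 (ε / (Cf + Cg + 2)) with hε'def
  have hε' : 0 < ε' := lt_min one_pos (div_pos hε hden)
  obtain ⟨Q1, hQ1⟩ := hf ε' hε'
  obtain ⟨Q2, hQ2⟩ := hg ε' hε'
  refine ⟨X * Q1 * Q2, fun z hz => ?_⟩
  rw [← rq_mul]
  have h1 := hQ1 z hz
  have h2 := hQ2 z hz
  have hq2 : ‖rq a Q2 z‖ ≤ Cg + 1 := by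
    have : ‖rq a Q2 z‖ ≤ ‖g z‖ + ‖g z - rq a Q2 z‖ := by
      have := norm_sub_le (g z) (g z - rq a Q2 z)
      simpa using this
    have hε'1 : ε' ≤ 1 := min_le_left _ _
    have := hbg z hz
    linarith
  have key : f z * g z - rq a Q1 z * rq a Q2 z
      = f z * (g z - rq a Q2 z) + (f z - rq a Q1 z) * rq a Q2 z := by ring
  rw [key]
  have hε'2 : ε' ≤ ε / (Cf + Cg + 2) := min_le_right _ _
  calc ‖f z * (g z - rq a Q2 z) + (f z - rq a Q1 z) * rq a Q2 z‖
      ≤ ‖f z * (g z - rq a Q2 z)‖ + ‖(f z - rq a Q1 z) * rq a Q2 z‖ := norm_add_le _ _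
    _ = ‖f z‖ * ‖g z - rq a Q2 z‖ + ‖f z - rq a Q1 z‖ * ‖rq a Q2 z‖ := by
        rw [norm_mul, norm_mul]
    _ ≤ Cf * ε' + ε' * (Cg + 1) := by
        have hA : ‖f z‖ * ‖g z - rq a Q2 z‖ ≤ Cf * ε' :=
          mul_le_mul (hbf z hz) h2.le (norm_nonneg _) hCf
        have hB : ‖f z - rq a Q1 z‖ * ‖rq a Q2 z‖ ≤ ε' * (Cg + 1) :=
          mul_le_mul h1.le hq2 (norm_nonneg _) hε'.le
        linarith
    _ = (Cf + Cg + 1) * ε' := by ring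
    _ ≤ (Cf + Cg + 1) * (ε / (Cf + Cg + 2)) := by
        apply mul_le_mul_of_nonneg_left hε'2; linarith
    _ < ε := by
        rw [mul_div_assoc', div_lt_iff₀ hden]
        nlinarith

lemma approx_pow {E : Set ℂ} {a : ℂ} {f : ℂ → ℂ} {Cf : ℝ} (hCf : 0 ≤ Cf)
    (hf : ApproxOn E a f) (hbf : ∀ z ∈ E, ‖f z‖ ≤ Cf) :
    ∀ n : ℕ, ApproxOn E a (fun z => f z ^ (n + 1)) := by
  intro n
  induction n with
  | zero => simpa using hf
  | succ n ih =>
    have hb : ∀ z ∈ E, ‖f z ^ (n + 1)‖ ≤ Cf ^ (n + 1) := by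
      intro z hz
      rw [norm_pow]
      exact pow_le_pow_left₀ (norm_nonneg _) (hbf z hz) _
    have := approx_mul hCf (pow_nonneg hCf (n + 1)) hf ih hbf hb
    intro ε hε
    obtain ⟨Q, hQ⟩ := this ε hε
    refine ⟨Q, fun z hz => ?_⟩
    have := hQ z hz
    simpa [pow_succ, mul_comm, mul_assoc, mul_left_comm] using this

lemma approx_zero {E : Set ℂ} {a : ℂ} : ApproxOn E a (fun _ => 0) := by
  intro ε hε
  exact ⟨0, fun z hz => by simp [rq, hε]⟩

lemma approx_sum {E : Set ℂ} {a : ℂ} (M : ℕ) (c : ℕ → ℂ) (f : ℕ → ℂ → ℂ)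
    (hf : ∀ n, n < M → ApproxOn E a (f n)) :
    ApproxOn E a (fun z => ∑ n ∈ Finset.range M, c n * f n z) := by
  induction M with
  | zero => simpa using (approx_zero (E := E) (a := a))
  | succ M ih =>
    have h1 : ApproxOn E a (fun z => ∑ n ∈ Finset.range M, c n * f n z) :=
      ih (fun n hn => hf n (Nat.lt_succ_of_lt hn))
    have h2 : ApproxOn E a (fun z => c M * f M z) :=
      approx_const_mul _ (hf M (Nat.lt_succ_self M))
    have := approx_add h1 h2
    intro ε hε
    obtain ⟨Q, hQ⟩ := this ε hε
    refine ⟨Q, fun z hz => ?_⟩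
    have := hQ z hz
    simpa [Finset.sum_range_succ] using this

/-- Pole-pushing step: move the pole a distance ≤ δ. -/
lemma approx_step {E : Set ℂ} {a : ℂ} {δ : ℝ} (hδ : 0 < δ) {c c' : ℂ}
    (hc : ∀ z ∈ E, 2 * δ ≤ ‖z - c‖)
    (hcc : ‖c' - c‖ ≤ δ)
    (h : ApproxOn E a fun z => (z - c)⁻¹) :
    ApproxOn E a fun z => (z - c')⁻¹ := by
  intro ε hε
  obtain ⟨M, hM⟩ : ∃ M : ℕ, (1 / 2 : ℝ) ^ M / δ < ε / 2 := by
    obtain ⟨M, hM⟩ := exists_pow_lt_of_lt_one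
      (show (0:ℝ) < ε / 2 * δ by positivity) (by norm_num : (1/2:ℝ) < 1)
    refine ⟨M, ?_⟩
    rw [div_lt_iff₀ hδ]
    linarith
  -- bound for (z - c)⁻¹
  have hbf : ∀ z ∈ E, ‖(z - c)⁻¹‖ ≤ (2 * δ)⁻¹ := by
    intro z hz
    rw [norm_inv]
    exact inv_anti₀ (by linarith) (hc z hz)
  -- the truncated geometric series approximates (z - c')⁻¹
  set g : ℂ → ℂ := fun z => ∑ n ∈ Finset.range M, (c' - c) ^ n * ((z - c)⁻¹) ^ (n + 1) with hg
  have tail : ∀ z ∈ E, ‖(z - c')⁻¹ - g z‖ ≤ (1 / 2 : ℝ) ^ M / δ := by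
    intro z hz
    set u : ℂ := (z - c)⁻¹ with hu
    set w : ℂ := c' - c with hw
    have hzc : z - c ≠ 0 := by
      intro h0
      have := hc z hz
      rw [h0, norm_zero] at this
      linarith
    have hun : ‖u‖ ≤ (2 * δ)⁻¹ := hbf z hz
    have hwu : ‖w * u‖ ≤ 1 / 2 := by
      rw [norm_mul]
      calc ‖w‖ * ‖u‖ ≤ δ * (2 * δ)⁻¹ := by
            apply mul_le_mul hcc hun (norm_nonneg _) (le_of_lt hδ)
        _ = 1 / 2 := by field_simp
    have hne : (1 : ℂ) - w * u ≠ 0 := by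
      intro h0
      have : (1 : ℂ) = w * u := by linear_combination h0
      have := congrArg norm this
      rw [norm_one] at this
      rw [← this] at hwu
      norm_num at hwu
    have h1wu : (1 / 2 : ℝ) ≤ ‖(1 : ℂ) - w * u‖ := by
      have := norm_sub_norm_le (1 : ℂ) (w * u)
      rw [norm_one] at this
      linarith
    have hzc' : z - c' = (z - c) * (1 - w * u) := by
      have : (z - c) * u = 1 := mul_inv_cancel₀ hzc
      calc z - c' = (z - c) - w := by rw [hw]; ring
        _ = (z - c) * 1 - w * ((z - c) * u) := by rw [this]; ring
        _ = (z - c) * (1 - w * u) := by ring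
    have hinv : (z - c')⁻¹ = u * (1 - w * u)⁻¹ := by
      rw [hzc', mul_inv, hu]
    have hgz : g z = u * ∑ n ∈ Finset.range M, (w * u) ^ n := by
      rw [hg, Finset.mul_sum]
      apply Finset.sum_congr rfl
      intro n _
      rw [mul_pow, pow_succ]
      ring
    have hxne : w * u ≠ 1 := by
      intro h0
      apply hne
      rw [h0]; ring
    have key : (z - c')⁻¹ - g z = u * (w * u) ^ M * (1 - w * u)⁻¹ := by
      rw [hinv, hgz, geom_sum_eq hxne]
      have hne' : w * u - 1 ≠ 0 := by
        intro h0
        apply hne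
        linear_combination -h0
      rw [div_eq_mul_inv, show (w * u - 1)⁻¹ = -(1 - w * u)⁻¹ by rw [← inv_neg, neg_sub]]
      ring
    rw [key]
    have hinvb : ‖((1 : ℂ) - w * u)⁻¹‖ ≤ 2 := by
      rw [norm_inv]
      calc ‖(1:ℂ) - w * u‖⁻¹ ≤ (1/2 : ℝ)⁻¹ :=
            inv_anti₀ (by norm_num) h1wu
        _ = 2 := by norm_num
    calc ‖u * (w * u) ^ M * (1 - w * u)⁻¹‖
        = ‖u‖ * ‖w * u‖ ^ M * ‖((1:ℂ) - w * u)⁻¹‖ := by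
          rw [norm_mul, norm_mul, norm_pow]
      _ ≤ (2 * δ)⁻¹ * (1 / 2) ^ M * 2 := by
          have hp : ‖w * u‖ ^ M ≤ (1 / 2 : ℝ) ^ M :=
            pow_le_pow_left₀ (norm_nonneg _) hwu M
          have h1 : (0:ℝ) ≤ ‖u‖ := norm_nonneg _
          have h2 : (0:ℝ) ≤ (2 * δ)⁻¹ := by positivity
          calc ‖u‖ * ‖w * u‖ ^ M * ‖((1:ℂ) - w * u)⁻¹‖
              ≤ (2 * δ)⁻¹ * (1/2) ^ M * ‖((1:ℂ) - w * u)⁻¹‖ := by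
                apply mul_le_mul_of_nonneg_right _ (norm_nonneg _)
                exact mul_le_mul hun hp (by positivity) h2
            _ ≤ (2 * δ)⁻¹ * (1/2) ^ M * 2 := by
                apply mul_le_mul_of_nonneg_left hinvb (by positivity)
      _ = (1 / 2 : ℝ) ^ M / δ := by
          field_simp
  -- g is approximable
  have hag : ApproxOn E a g := by
    rw [hg]
    exact approx_sum M (fun n => (c' - c) ^ n)
      (fun n z => ((z - c)⁻¹) ^ (n + 1))
      (fun n _ => approx_pow (by positivity) h hbf n)
  obtain ⟨Q, hQ⟩ := hag (ε / 2) (by linarith)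
  refine ⟨Q, fun z hz => ?_⟩
  calc ‖(z - c')⁻¹ - rq a Q z‖
      ≤ ‖(z - c')⁻¹ - g z‖ + ‖g z - rq a Q z‖ := by
        have : (z - c')⁻¹ - rq a Q z = ((z - c')⁻¹ - g z) + (g z - rq a Q z) := by ring
        rw [this]; exact norm_add_le _ _
    _ < (1 / 2 : ℝ) ^ M / δ + ε / 2 := by
        have := tail z hz
        have := hQ z hz
        linarith
    _ < ε := by linarith

end RungeAux

open RungeAux Polynomial in
/-- Runge's pole-pushing approximation: if `γ : [0,1] → ℂ` is a continuous curve
from `b` to `a` (with `a ≠ b`) and `δ > 0`, then for every `ε > 0` there are `N`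
and constants `A_1, …, A_N` such that every `z` at distance at least `2δ` from the
image of `γ` satisfies `|1/(z−b) − Σ_{j=1}^N A_j/(z−a)^j| < ε`. -/
theorem runge_pole_pushing
    (a b : ℂ) (hab : a ≠ b)
    (γ : ℝ → ℂ) (hγ : ContinuousOn γ (Set.Icc 0 1))
    (hγ0 : γ 0 = b) (hγ1 : γ 1 = a)
    (δ : ℝ) (hδ : 0 < δ) (ε : ℝ) (hε : 0 < ε) :
    ∃ N : ℕ, 0 < N ∧ ∃ A : ℕ → ℂ,
      ∀ z : ℂ, 2 * δ ≤ Metric.infDist z (γ '' Set.Icc 0 1) →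
        ‖(z - b)⁻¹ - ∑ j ∈ Finset.Icc 1 N, A j / (z - a) ^ j‖ < ε := by
  classical
  set K : Set ℂ := γ '' Set.Icc 0 1 with hK
  set E : Set ℂ := {z | 2 * δ ≤ Metric.infDist z K} with hE
  have hdist : ∀ z ∈ E, ∀ c ∈ K, 2 * δ ≤ ‖z - c‖ := by
    intro z hz c hc
    have h1 : Metric.infDist z K ≤ dist z c := Metric.infDist_le_dist_of_mem hc
    have h2 : (2 : ℝ) * δ ≤ Metric.infDist z K := hz
    rw [Complex.dist_eq] at h1
    linarith
  -- uniform continuity of γ on [0,1]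
  have hucont : UniformContinuousOn γ (Set.Icc 0 1) :=
    isCompact_Icc.uniformContinuousOn_of_continuous hγ
  rw [Metric.uniformContinuousOn_iff] at hucont
  obtain ⟨η, hη, hmod⟩ := hucont δ hδ
  obtain ⟨m0, hm0⟩ := exists_nat_one_div_lt hη
  set m : ℕ := m0 + 1 with hm
  have hmpos : 0 < m := Nat.succ_pos _
  have hmR : (0:ℝ) < (m : ℝ) := by exact_mod_cast hmpos
  have hmlt : 1 / (m : ℝ) < η := by
    rw [hm]; push_cast; exact hm0
  -- membership of partition points
  have hmem : ∀ i : ℕ, i ≤ m → ((i : ℝ) / m) ∈ Set.Icc (0:ℝ) 1 := by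
    intro i hi
    constructor
    · positivity
    · rw [div_le_one hmR]
      exact_mod_cast hi
  have hmemK : ∀ i : ℕ, i ≤ m → γ ((i : ℝ) / m) ∈ K := by
    intro i hi
    exact ⟨(i : ℝ) / m, hmem i hi, rfl⟩
  -- the chain induction
  have main : ∀ i : ℕ, i ≤ m →
      ApproxOn E a (fun z => (z - γ (((m - i : ℕ) : ℝ) / m))⁻¹) := by
    intro i
    induction i with
    | zero =>
      intro _
      have h1 : ((m - 0 : ℕ) : ℝ) / m = 1 := by
        simp [div_self (ne_of_gt hmR)]
      rw [h1, hγ1]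
      intro ε' hε'
      refine ⟨1, fun z hz => ?_⟩
      simp only [rq, eval_one, mul_one, sub_self, norm_zero]
      exact hε'
    | succ i ih =>
      intro hi
      have hi' : i ≤ m := Nat.le_of_succ_le hi
      have happrox := ih hi'
      apply approx_step hδ
        (c := γ (((m - i : ℕ) : ℝ) / m)) (hc := ?_) (hcc := ?_) (h := happrox)
      · intro z hz
        exact hdist z hz _ (hmemK (m - i) (Nat.sub_le _ _))
      · -- ‖γ ((m - (i+1))/m) - γ ((m - i)/m)‖ ≤ δ
        have h1 : ((m - (i + 1) : ℕ) : ℝ) = (m : ℝ) - i - 1 := by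
          have : i + 1 ≤ m := hi
          push_cast [Nat.cast_sub this]
          ring
        have h2 : ((m - i : ℕ) : ℝ) = (m : ℝ) - i := by
          push_cast [Nat.cast_sub hi']
          ring
        have hd : dist (((m - (i+1) : ℕ) : ℝ) / m) (((m - i : ℕ) : ℝ) / m) < η := by
          rw [Real.dist_eq, h1, h2]
          have : ((m:ℝ) - i - 1) / m - ((m:ℝ) - i) / m = -(1 / m) := by
            field_simp
            ring
          rw [this, abs_neg, abs_of_pos (by positivity)]
          exact hmlt
        have := hmod _ (hmem _ (Nat.sub_le _ _)) _ (hmem _ (Nat.sub_le _ _)) hd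
        rw [Complex.dist_eq] at this
        exact le_of_lt this
  have hb : ApproxOn E a (fun z => (z - b)⁻¹) := by
    have := main m le_rfl
    simpa [Nat.sub_self, hγ0] using this
  obtain ⟨Q, hQ⟩ := hb ε hε
  refine ⟨Q.natDegree + 1, Nat.succ_pos _, fun j => Q.coeff (j - 1), fun z hz => ?_⟩
  have hsum : ∑ j ∈ Finset.Icc 1 (Q.natDegree + 1), Q.coeff (j - 1) / (z - a) ^ j
      = rq a Q z := by
    have h1 : ∀ j : ℕ, Q.coeff (j - 1) / (z - a) ^ j
        = Q.coeff (j - 1) * ((z - a)⁻¹) ^ j := by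
      intro j
      rw [div_eq_mul_inv, inv_pow]
    simp only [h1]
    rw [show Finset.Icc 1 (Q.natDegree + 1) = Finset.Ico 1 (Q.natDegree + 2) by
      exact (Finset.Ico_add_one_right_eq_Icc (a := 1) (b := Q.natDegree + 1)).symm]
    rw [Finset.sum_Ico_eq_sum_range]
    rw [rq, Polynomial.eval_eq_sum_range, Finset.mul_sum]
    rw [show Q.natDegree + 2 - 1 = Q.natDegree + 1 from rfl]
    apply Finset.sum_congr rfl
    intro n _
    rw [show 1 + n - 1 = n by omega]
    ring
  rw [hsum]
  exact hQ z hz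
end

section
/- Let c ∈ ℂ, R > 0, and let a, b be points of the open disc D(c,R). Let A_1, …, A_N be complex numbers and ε > 0, and suppose that |1/(z−b) − Σ_{j=1}^N A_j/(z−a)^j| ≤ ε for every z on the circle |z − c| = R. Then for every function h holomorphic on an open set containing the closed disc cl(D(c,R)), |h(b) − Σ_{j=1}^N A_j h^{(j−1)}(a)/(j−1)!| ≤ ε · R · sup_{|z−c|=R} |h(z)|. (A uniform rational approximation on an enclosing contour yields an approximate one-point quadrature identity for holomorphic functions via the Cauchy integral formulas.) -/
open Finset

open Metric Real Complex Function in
section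
open Metric Real Complex Function


lemma circleIntegral_finset_sum' {ι : Type*} (s : Finset ι) (f : ι → ℂ → ℂ) (c : ℂ) (R : ℝ)
    (hf : ∀ i ∈ s, CircleIntegrable (f i) c R) :
    (∮ z in C(c, R), ∑ i ∈ s, f i z) = ∑ i ∈ s, ∮ z in C(c, R), f i z := by
  simp only [circleIntegral, Finset.smul_sum]
  exact intervalIntegral.integral_finset_sum fun i hi => (hf i hi).out

lemma dslope_differentiableOn' {f : ℂ → ℂ} {U : Set ℂ} (hU : IsOpen U)
    (hf : DifferentiableOn ℂ f U) {a : ℂ} (ha : a ∈ U) :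
    DifferentiableOn ℂ (dslope f a) U := by
  intro x hx
  rcases eq_or_ne x a with rfl | hne
  · obtain ⟨p, hp⟩ := hf.analyticAt (hU.mem_nhds hx)
    exact (hp.has_fpower_series_dslope_fslope.analyticAt.differentiableAt).differentiableWithinAt
  · exact ((differentiableAt_dslope_of_ne hne).mpr
      ((hf x hx).differentiableAt (hU.mem_nhds hx))).differentiableWithinAt

lemma iterate_dslope_apply_self' {f : ℂ → ℂ} {U : Set ℂ} (hU : IsOpen U)
    (hf : DifferentiableOn ℂ f U) {a : ℂ} (ha : a ∈ U) (n : ℕ) :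
    (Function.swap dslope a)^[n] f a = iteratedDeriv n f a / (n.factorial : ℂ) := by
  obtain ⟨p, hp⟩ := hf.analyticAt (hU.mem_nhds ha)
  have h1 : (Function.swap dslope a)^[n] f a = p.coeff n := by
    have h2 := (hp.has_fpower_series_iterate_dslope_fslope n).coeff_zero (fun _ => 1)
    rw [← h2]
    have h5 : (FormalMultilinearSeries.fslope^[n] p).coeff 0 = p.coeff n := by
      simpa using p.coeff_iterate_fslope n 0
    exact h5
  obtain ⟨r, hball⟩ := hp
  have h3 := hball.factorial_smul (1 : ℂ) n
  have h4 : iteratedDeriv n f a = iteratedFDeriv ℂ n f a (fun _ => 1) :=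
    iteratedDeriv_eq_iteratedFDeriv ..
  rw [h1, h4, ← h3]
  have : p n (fun _ => 1) = p.coeff n := rfl
  rw [this, nsmul_eq_mul]
  have hne : (n.factorial : ℂ) ≠ 0 := Nat.cast_ne_zero.mpr n.factorial_ne_zero
  field_simp

lemma circleIntegral_add' {f g : ℂ → ℂ} {c : ℂ} {R : ℝ} (hf : CircleIntegrable f c R)
    (hg : CircleIntegrable g c R) :
    (∮ z in C(c, R), (f z + g z)) = (∮ z in C(c, R), f z) + ∮ z in C(c, R), g z := by
  simp only [circleIntegral, smul_add]
  exact intervalIntegral.integral_add hf.out hg.out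

lemma circleIntegral_inv_pow_smul' {c : ℂ} {R : ℝ} (hR : 0 < R) {a : ℂ} (ha : a ∈ ball c R)
    {U : Set ℂ} (hU : IsOpen U) (hcb : closedBall c R ⊆ U) :
    ∀ (n : ℕ) (f : ℂ → ℂ), DifferentiableOn ℂ f U →
      (∮ z in C(c, R), ((z - a) ^ (n + 1))⁻¹ • f z)
        = (2 * π * Complex.I) • ((Function.swap dslope a)^[n] f a) := by
  have haU : a ∈ U := hcb (ball_subset_closedBall ha)
  have hsub : sphere c R ⊆ U := fun z hz => hcb (sphere_subset_closedBall hz)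
  have hane : ∀ z ∈ sphere c R, z ≠ a := by
    intro z hz hza
    rw [mem_sphere] at hz
    rw [mem_ball] at ha
    rw [hza] at hz
    exact absurd hz (ne_of_lt ha)
  intro n
  induction n with
  | zero =>
    intro f hf
    simpa using (hf.mono hcb).circleIntegral_sub_inv_smul ha
  | succ n ih =>
    intro f hf
    have hd : DifferentiableOn ℂ (dslope f a) U := dslope_differentiableOn' hU hf haU
    have hint1 : CircleIntegrable (fun z => ((z - a) ^ (n + 1))⁻¹ • dslope f a z) c R := by
      apply ContinuousOn.circleIntegrable hR.le
      apply ContinuousOn.fun_smul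
      · exact ContinuousOn.inv₀ (by fun_prop) fun z hz =>
          pow_ne_zero _ (sub_ne_zero.mpr (hane z hz))
      · exact (hd.continuousOn.mono hsub)
    have hint2 : CircleIntegrable (fun z => (z - a) ^ (-(n + 2) : ℤ) • f a) c R := by
      apply ContinuousOn.circleIntegrable hR.le
      apply ContinuousOn.fun_smul _ continuousOn_const
      exact ContinuousOn.zpow₀ (by fun_prop) _ fun z hz =>
        Or.inl (sub_ne_zero.mpr (hane z hz))
    have heq : (∮ z in C(c, R), ((z - a) ^ (n + 1 + 1))⁻¹ • f z)
        = ∮ z in C(c, R), (((z - a) ^ (n + 1))⁻¹ • dslope f a z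
            + (z - a) ^ (-(n + 2) : ℤ) • f a) := by
      apply circleIntegral.integral_congr hR.le
      intro z hz
      have hza : z ≠ a := hane z hz
      have hza' : z - a ≠ 0 := sub_ne_zero.mpr hza
      simp only [smul_eq_mul]
      rw [dslope_of_ne f hza, slope_def_field]
      have hzp : (z - a) ^ (-(n + 2) : ℤ) = ((z - a) ^ (n + 2))⁻¹ := by
        rw [zpow_neg]; norm_cast
      rw [hzp]
      field_simp
      ring
    rw [heq, circleIntegral_add' hint1 hint2,
      circleIntegral.integral_smul_const,
      circleIntegral.integral_sub_zpow_of_ne (by omega) c a R, zero_smul, add_zero,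
      ih (dslope f a) hd, Function.iterate_succ_apply]
end

open Metric Real Complex Function in
/-- A uniform rational approximation on an enclosing circle yields an approximate
one-point quadrature identity: if `a, b ∈ D(c,R)` and
`|1/(z−b) − Σ_{j=1}^N A_j/(z−a)^j| ≤ ε` on the circle `|z−c| = R`, then every `h`
holomorphic on a neighborhood of the closed disc satisfies
`|h(b) − Σ_{j=1}^N A_j h^{(j−1)}(a)/(j−1)!| ≤ ε R sup_{|z−c|=R} |h|`. -/
theorem contour_approximation_to_quadrature
    (c : ℂ) (R : ℝ) (hR : 0 < R)
    (a b : ℂ) (ha : a ∈ Metric.ball c R) (hb : b ∈ Metric.ball c R)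
    (N : ℕ) (A : ℕ → ℂ) (ε : ℝ) (hε : 0 < ε)
    (happrox : ∀ z : ℂ, ‖z - c‖ = R →
      ‖(z - b)⁻¹ - ∑ j ∈ Finset.Icc 1 N, A j / (z - a) ^ j‖ ≤ ε) :
    ∀ (h : ℂ → ℂ) (U : Set ℂ), IsOpen U → Metric.closedBall c R ⊆ U →
      DifferentiableOn ℂ h U →
      ‖h b - ∑ j ∈ Finset.Icc 1 N, A j * iteratedDeriv (j - 1) h a / ((j - 1).factorial : ℂ)‖
        ≤ ε * R * ⨆ z ∈ Metric.sphere c R, ‖h z‖ := by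
  intro h U hUopen hUsub hdiff
  have hsphU : sphere c R ⊆ U := sphere_subset_closedBall.trans hUsub
  have hconth : ContinuousOn h (sphere c R) := hdiff.continuousOn.mono hsphU
  set M : ℝ := ⨆ z ∈ sphere c R, ‖h z‖ with hMdef
  have hbdd : BddAbove ((fun z => ‖h z‖) '' sphere c R) :=
    ((isCompact_sphere c R).image_of_continuousOn hconth.norm).bddAbove
  have hz0 : (c + R : ℂ) ∈ sphere c R := by
    simp [mem_sphere, Complex.dist_eq, abs_of_pos hR]
  have hne : (sphere c R).Nonempty := ⟨c + R, hz0⟩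
  have hrange : BddAbove (Set.range fun z : sphere c R => ‖h z‖) := by
    have : (Set.range fun z : sphere c R => ‖h ↑z‖) = (fun z => ‖h z‖) '' sphere c R :=
      (Set.image_eq_range (fun z => ‖h z‖) (sphere c R)).symm
    rw [this]
    exact hbdd
  have hpos0 : sSup (∅ : Set ℝ) ≤ ⨆ i : sphere c R, ‖h i‖ := by
    rw [Real.sSup_empty]
    exact le_trans (norm_nonneg (h (c + R))) (le_ciSup_set hbdd hz0)
  have hMsub : M = ⨆ i : sphere c R, ‖h ↑i‖ := (ciSup_subtype'' hrange hpos0).symm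
  have hM : ∀ z ∈ sphere c R, ‖h z‖ ≤ M := fun z hz => hMsub ▸ le_ciSup_set hbdd hz
  have hM0 : 0 ≤ M := le_trans (norm_nonneg _) (hM _ hz0)
  have hane : ∀ z ∈ sphere c R, z ≠ a := by
    intro z hz hza
    rw [mem_sphere] at hz
    rw [mem_ball] at ha
    rw [hza] at hz
    exact absurd hz (ne_of_lt ha)
  have hbne : ∀ z ∈ sphere c R, z ≠ b := by
    intro z hz hzb
    rw [mem_sphere] at hz
    rw [mem_ball] at hb
    rw [hzb] at hz
    exact absurd hz (ne_of_lt hb)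
  have hKint : ∀ j ∈ Finset.Icc 1 N,
      CircleIntegrable (fun z => A j / (z - a) ^ j * h z) c R := by
    intro j _
    apply ContinuousOn.circleIntegrable hR.le
    apply ContinuousOn.mul _ hconth
    apply ContinuousOn.div continuousOn_const (by fun_prop)
    exact fun z hz => pow_ne_zero _ (sub_ne_zero.mpr (hane z hz))
  have hbint : CircleIntegrable (fun z => (z - b)⁻¹ • h z) c R := by
    apply ContinuousOn.circleIntegrable hR.le
    apply ContinuousOn.fun_smul _ hconth
    exact ContinuousOn.inv₀ (by fun_prop) fun z hz => sub_ne_zero.mpr (hbne z hz)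
  have hsumint : CircleIntegrable
      (fun z => ∑ j ∈ Finset.Icc 1 N, A j / (z - a) ^ j * h z) c R := by
    apply ContinuousOn.circleIntegrable hR.le
    apply continuousOn_finset_sum
    intro j _
    apply ContinuousOn.mul _ hconth
    apply ContinuousOn.div continuousOn_const (by fun_prop)
    exact fun z hz => pow_ne_zero _ (sub_ne_zero.mpr (hane z hz))
  have key : (∮ z in C(c, R), ((z - b)⁻¹ - ∑ j ∈ Finset.Icc 1 N, A j / (z - a) ^ j) • h z)
      = (2 * π * Complex.I) •
        (h b - ∑ j ∈ Finset.Icc 1 N,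
          A j * iteratedDeriv (j - 1) h a / ((j - 1).factorial : ℂ)) := by
    have e1 : Set.EqOn (fun z => ((z - b)⁻¹ - ∑ j ∈ Finset.Icc 1 N, A j / (z - a) ^ j) • h z)
        (fun z => (z - b)⁻¹ • h z - ∑ j ∈ Finset.Icc 1 N, A j / (z - a) ^ j * h z)
        (sphere c R) := by
      intro z _
      simp only [smul_eq_mul, sub_mul, Finset.sum_mul]
    rw [circleIntegral.integral_congr hR.le e1,
      circleIntegral.integral_sub hbint hsumint,
      circleIntegral_finset_sum' _ _ _ _ hKint]
    have e2 : ∀ j ∈ Finset.Icc 1 N, (∮ z in C(c, R), A j / (z - a) ^ j * h z)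
        = (2 * π * Complex.I) *
            (A j * iteratedDeriv (j - 1) h a / ((j - 1).factorial : ℂ)) := by
      intro j hj
      have hj1 : j - 1 + 1 = j := Nat.sub_add_cancel (Finset.mem_Icc.mp hj).1
      have e3 : (fun z => A j / (z - a) ^ j * h z)
          = fun z => A j * (((z - a) ^ (j - 1 + 1))⁻¹ • h z) := by
        funext z
        rw [hj1]
        simp only [smul_eq_mul, div_eq_mul_inv]
        ring
      rw [e3, circleIntegral.integral_const_mul,
        circleIntegral_inv_pow_smul' hR ha hUopen hUsub (j - 1) h hdiff,
        iterate_dslope_apply_self' hUopen hdiff (hUsub (ball_subset_closedBall ha)) (j - 1)]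
      simp only [smul_eq_mul]
      ring
    rw [Finset.sum_congr rfl e2, (hdiff.mono hUsub).circleIntegral_sub_inv_smul hb,
      ← Finset.mul_sum]
    simp only [smul_eq_mul]
    ring
  have hnorm : ‖∮ z in C(c, R), ((z - b)⁻¹ - ∑ j ∈ Finset.Icc 1 N, A j / (z - a) ^ j) • h z‖
      ≤ 2 * π * R * (ε * M) := by
    apply circleIntegral.norm_integral_le_of_norm_le_const hR.le
    intro z hz
    rw [norm_smul]
    have hz' : ‖z - c‖ = R := by rwa [mem_sphere, Complex.dist_eq] at hz
    exact mul_le_mul (happrox z hz') (hM z hz) (norm_nonneg _) hε.le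
  rw [key, norm_smul] at hnorm
  have h2pi : ‖(2 * (π : ℂ) * Complex.I)‖ = 2 * π := by
    simp [abs_of_pos Real.pi_pos]
  rw [h2pi] at hnorm
  nlinarith [Real.pi_pos, norm_nonneg (h b - ∑ j ∈ Finset.Icc 1 N,
    A j * iteratedDeriv (j - 1) h a / ((j - 1).factorial : ℂ))]
end
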